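/- arXiv:2202.06834 — 3 statements merged into one kernel-verified Lean document; each statement's English description precedes it below -/
import Mathlib

section
/- Support-based filtering preserves frequent patterns: let D' be obtained from D by removing from every itemset all events e with supp(⟨{e}⟩) < θ·N. Then for every pattern P, P is frequent in D (supp_D(P) ≥ θ·N) if and only if P is frequent in D' (supp_{D'}(P) ≥ θ·N), where N is the original number of sequences. -/
open Classical

def IsSubseq {E : Type*} (P S : List (Finset E)) : Prop :=
  ∃ S' : List (Finset E), S'.Sublist S ∧ List.Forall₂ (· ⊆ ·) P S'

noncomputable def supp {E : Type*} (D : List (List (Finset E))) (P : List (Finset E)) : ℕ :=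
  D.countP (fun S => decide (IsSubseq P S))

lemma isSubseq_of_map {E : Type*} {P S : List (Finset E)} {f : Finset E → Finset E}
    (hf : ∀ I, f I ⊆ I) (h : IsSubseq P (S.map f)) : IsSubseq P S := by
  obtain ⟨T, hT, h2⟩ := h
  obtain ⟨T', hT', rfl⟩ := List.sublist_map_iff.mp hT
  refine ⟨T', hT', ?_⟩
  rw [List.forall₂_map_right_iff] at h2
  exact h2.imp fun {a b} hab => hab.trans (hf b)

lemma isSubseq_singleton {E : Type*} {P S : List (Finset E)} {I : Finset E} {e : E}
    (hI : I ∈ P) (he : e ∈ I) (h : IsSubseq P S) : IsSubseq [{e}] S := by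
  obtain ⟨T, hT, h2⟩ := h
  obtain ⟨J, hJT, hIJ⟩ : ∃ J ∈ T, I ⊆ J := by
    clear hT
    induction h2 with
    | nil => simp at hI
    | cons hab _ ih =>
      rcases List.mem_cons.mp hI with rfl | hI'
      · exact ⟨_, List.mem_cons_self, hab⟩
      · obtain ⟨J, hJ, hIJ⟩ := ih hI'
        exact ⟨J, List.mem_cons_of_mem _ hJ, hIJ⟩
  refine ⟨[J], (List.singleton_sublist.mpr hJT).trans hT, ?_⟩
  exact List.forall₂_cons.mpr ⟨by simpa using hIJ he, List.Forall₂.nil⟩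

lemma isSubseq_map_filter {E : Type*} [DecidableEq E] {P S : List (Finset E)}
    {p : E → Prop} [DecidablePred p]
    (hP : ∀ I ∈ P, ∀ e ∈ I, p e) (h : IsSubseq P S) :
    IsSubseq P (S.map (fun I => I.filter p)) := by
  obtain ⟨T, hT, h2⟩ := h
  refine ⟨T.map (fun I => I.filter p), hT.map _, ?_⟩
  rw [List.forall₂_map_right_iff]
  clear hT
  induction h2 with
  | nil => exact List.Forall₂.nil
  | cons hab _ ih =>
    refine List.Forall₂.cons ?_ (ih fun I hI => hP I (List.mem_cons_of_mem _ hI))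
    intro e he
    exact Finset.mem_filter.mpr ⟨hab he, hP _ List.mem_cons_self _ he⟩

/-- Support-based filtering preserves frequent patterns: removing from every itemset
of every sequence all events `e` whose singleton support is below `θ·N` changes the
support of no pattern `P` across the frequency threshold `θ·N`
(`N` being the original number of sequences). -/
theorem filtering_preserves_frequent {E : Type*} [DecidableEq E]
    (D : List (List (Finset E))) (θ : ℝ) (hθ0 : 0 < θ) (hθ1 : θ ≤ 1)
    (P : List (Finset E)) :
    θ * (D.length : ℝ) ≤ (supp D P : ℝ) ↔
      θ * (D.length : ℝ) ≤
        (supp (D.map (List.map (fun I =>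
            I.filter (fun e => θ * (D.length : ℝ) ≤ (supp D [{e}] : ℝ))))) P : ℝ) := by
  constructor
  · intro h
    have hfreq : ∀ I ∈ P, ∀ e ∈ I, θ * (D.length : ℝ) ≤ (supp D [{e}] : ℝ) := by
      intro I hI e he
      refine h.trans ?_
      exact_mod_cast List.countP_mono_left fun S _ hS => by
        simp only [decide_eq_true_eq] at *
        exact isSubseq_singleton hI he hS
    refine h.trans ?_
    have : supp D P ≤ supp (D.map (List.map (fun I =>
        I.filter (fun e => θ * (D.length : ℝ) ≤ (supp D [{e}] : ℝ))))) P := by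
      unfold supp
      rw [List.countP_map]
      exact List.countP_mono_left fun S _ hS => by
        simp only [Function.comp, decide_eq_true_eq] at *
        exact isSubseq_map_filter hfreq hS
    exact_mod_cast this
  · intro h
    refine h.trans ?_
    have : supp (D.map (List.map (fun I =>
        I.filter (fun e => θ * (D.length : ℝ) ≤ (supp D [{e}] : ℝ))))) P ≤ supp D P := by
      unfold supp
      rw [List.countP_map]
      exact List.countP_mono_left fun S _ hS => by
        simp only [Function.comp, decide_eq_true_eq] at *
        exact isSubseq_of_map (fun I => Finset.filter_subset _ _) hS
    exact_mod_cast this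
end

section
/- Pseudo-projection position correctness: for a sequence S (a list of events) and a pattern P, define pos(P, S) as the minimal index j such that P is a subsequence of the prefix S[1..j], if any. Then for any event e, P·e (P extended by e) is a subsequence of S if and only if pos(P, S) exists and e occurs in S at some index j' > pos(P, S); moreover, in that case pos(P·e, S) is the minimal such j'. -/
private lemma take_sublist_take {E : Type*} (l : List E) {m n : ℕ} (h : m ≤ n) :
    (l.take m).Sublist (l.take n) := by
  have : l.take m = (l.take n).take m := by
    rw [List.take_take, min_eq_left h]
  rw [this]
  exact List.take_sublist _ _

private lemma key_mp {E : Type*} {S P : List E} {e : E} {j : ℕ}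
    (h : (P ++ [e]).Sublist (S.take j)) :
    ∃ i, i < j ∧ sInf {j | P.Sublist (S.take j)} ≤ i ∧ ∃ h : i < S.length, S[i] = e := by
  obtain ⟨r₁, r₂, hS, hP, he⟩ := List.append_sublist_iff.mp h
  rw [List.singleton_sublist] at he
  obtain ⟨k, hk, hke⟩ := List.getElem_of_mem he
  refine ⟨r₁.length + k, ?_, ?_, ?_⟩
  · have := List.length_take_le j S
    rw [hS, List.length_append] at this
    omega
  · have hr₁ : r₁ = S.take (min r₁.length j) := by
      have h1 : r₁ = (S.take j).take r₁.length := by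
        rw [hS, List.take_left]
      rw [List.take_take] at h1
      exact h1
    apply le_trans (Nat.sInf_le (show min r₁.length j ∈ {j | P.Sublist (S.take j)} from by
      rw [Set.mem_setOf_eq, ← hr₁]; exact hP))
    omega
  · have hlen : r₁.length + k < (S.take j).length := by
      rw [hS, List.length_append]; omega
    have hlen' : r₁.length + k < S.length := by
      have : (S.take j).length = min j S.length := List.length_take
      simp only [List.length_take] at hlen
      omega
    refine ⟨hlen', ?_⟩
    have e1 : S[r₁.length + k]'hlen' = (S.take j)[r₁.length + k]'hlen :=
      (List.getElem_take).symm
    have e2 : (S.take j)[r₁.length + k]'hlen = r₂[k]'hk := by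
      simp only [List.getElem_of_eq hS]
      rw [List.getElem_append_right (Nat.le_add_right _ _)]
      simp
    rw [e1, e2, hke]

private lemma key_mpr {E : Type*} {S P : List E} {e : E} {j : ℕ}
    (hPS : P.Sublist S) {i : ℕ} (hij : i < j)
    (hpos : sInf {j | P.Sublist (S.take j)} ≤ i)
    (hi : i < S.length) (hie : S[i] = e) :
    (P ++ [e]).Sublist (S.take j) := by
  have hne : {j | P.Sublist (S.take j)}.Nonempty :=
    ⟨S.length, by simpa using hPS⟩
  have hmem : P.Sublist (S.take (sInf {j | P.Sublist (S.take j)})) := Nat.sInf_mem hne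
  have hPi : P.Sublist (S.take i) := hmem.trans (take_sublist_take S hpos)
  have hsplit : S.take j = S.take i ++ (S.take j).drop i := by
    have h1 : S.take i = (S.take j).take i := by
      rw [List.take_take, min_eq_left hij.le]
    rw [h1]
    exact (List.take_append_drop _ _).symm
  rw [hsplit]
  apply List.Sublist.append hPi
  rw [List.singleton_sublist]
  have h0 : 0 < ((S.take j).drop i).length := by
    rw [List.length_drop, List.length_take]; omega
  have : ((S.take j).drop i)[0] = e := by
    rw [List.getElem_drop, List.getElem_take]
    simpa using hie
  rw [← this]
  exact List.getElem_mem h0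

/-- Pseudo-projection position correctness. For a sequence `S` and pattern `P`
(lists of events), `sInf {j | P <+ S.take j}` is the minimal prefix length of `S`
containing `P` as a subsequence (when `P <+ S`). Then `P ++ [e]` is a subsequence
of `S` if and only if `P` is a subsequence of `S` and `e` occurs in `S` at some
(0-based) index `i ≥ pos(P, S)` (i.e. at 1-based position strictly greater than
`pos(P, S)`); moreover, in that case `pos(P ++ [e], S)` is one more than the minimal
such index, i.e. the minimal such 1-based position. -/
theorem pseudo_projection_correct {E : Type*} (S P : List E) (e : E) :
    ((P ++ [e]).Sublist S ↔
      P.Sublist S ∧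
        ∃ i, sInf {j | P.Sublist (S.take j)} ≤ i ∧ ∃ h : i < S.length, S[i] = e) ∧
      ((P ++ [e]).Sublist S →
        sInf {j | (P ++ [e]).Sublist (S.take j)} =
          sInf {i | sInf {j | P.Sublist (S.take j)} ≤ i ∧
            ∃ h : i < S.length, S[i] = e} + 1) := by
  have part1 : (P ++ [e]).Sublist S ↔
      P.Sublist S ∧
        ∃ i, sInf {j | P.Sublist (S.take j)} ≤ i ∧ ∃ h : i < S.length, S[i] = e := by
    constructor
    · intro h
      have hPS : P.Sublist S := (List.sublist_append_left P [e]).trans h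
      have h' : (P ++ [e]).Sublist (S.take S.length) := by simpa using h
      obtain ⟨i, _, hpos, hi, hie⟩ := key_mp h'
      exact ⟨hPS, i, hpos, hi, hie⟩
    · rintro ⟨hPS, i, hpos, hi, hie⟩
      have := key_mpr hPS hi hpos hi hie
      simpa using this
  refine ⟨part1, fun h => ?_⟩
  obtain ⟨hPS, i₀, hpos₀, hi₀, hie₀⟩ := part1.mp h
  set T : Set ℕ := {i | sInf {j | P.Sublist (S.take j)} ≤ i ∧ ∃ h : i < S.length, S[i] = e}
  have hTne : T.Nonempty := ⟨i₀, hpos₀, hi₀, hie₀⟩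
  have hseteq : {j | (P ++ [e]).Sublist (S.take j)} = {j | sInf T < j} := by
    ext j
    simp only [Set.mem_setOf_eq]
    constructor
    · intro hj
      obtain ⟨i, hij, hpos, hi, hie⟩ := key_mp hj
      exact lt_of_le_of_lt (Nat.sInf_le ⟨hpos, hi, hie⟩) hij
    · intro hj
      obtain ⟨hpos, hi, hie⟩ := Nat.sInf_mem hTne
      exact key_mpr hPS hj hpos hi hie
  rw [hseteq]
  apply le_antisymm
  · exact Nat.sInf_le (by simp)
  · have : sInf T < sInf {j | sInf T < j} :=
      Nat.sInf_mem (⟨sInf T + 1, by simp⟩ : {j | sInf T < j}.Nonempty)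
    omega
end

section
/- Flattening via transformed events is injective and invertible: the map sending a sequence of nonempty itemsets ⟨I_1,...,I_m⟩ (each itemset given as a sorted nonempty list of distinct events) to the flat list obtained by concatenating the itemsets with the first element of each itemset replaced by its 'barred' copy is injective, and the original sequence of itemsets can be recovered by splitting the flat list at barred events. -/
/-- Flatten one itemset (a sorted nonempty list of distinct events): the first event
is replaced by its "barred" copy (`Sum.inr`), the remaining events stay plain
(`Sum.inl`). -/
def flatBlock {E : Type*} : List E → List (E ⊕ E)
  | [] => []
  | a :: rest => Sum.inr a :: rest.map Sum.inl

/-- Flattening via transformed events: concatenate the itemsets, marking the first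
event of each itemset with its barred copy. -/
def flat {E : Type*} (s : List (List E)) : List (E ⊕ E) :=
  (s.map flatBlock).flatten

/-- Take the maximal prefix of plain (`Sum.inl`) events, returning it together
with the remaining suffix. -/
def takeInls {E : Type*} : List (E ⊕ E) → List E × List (E ⊕ E)
  | [] => ([], [])
  | Sum.inl a :: t => ((takeInls t).1.cons a, (takeInls t).2)
  | Sum.inr a :: t => ([], Sum.inr a :: t)

lemma takeInls_snd_length {E : Type*} : ∀ l : List (E ⊕ E), (takeInls l).2.length ≤ l.length
  | [] => by simp [takeInls]
  | Sum.inl a :: t => by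
      simpa [takeInls] using (takeInls_snd_length t).trans (Nat.le_succ _)
  | Sum.inr a :: t => by simp [takeInls]

/-- Split a flat list at barred events. -/
def unflat {E : Type*} : List (E ⊕ E) → List (List E)
  | [] => []
  | Sum.inl _ :: t => unflat t
  | Sum.inr a :: t => (a :: (takeInls t).1) :: unflat (takeInls t).2
termination_by l => l.length
decreasing_by
  · simp
  · have := takeInls_snd_length t
    simp
    omega

lemma takeInls_map_inl_append {E : Type*} (r : List E) (l : List (E ⊕ E)) :
    takeInls (r.map Sum.inl ++ l) = (r ++ (takeInls l).1, (takeInls l).2) := by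
  induction r with
  | nil => simp
  | cons a r ih => simp [takeInls, ih]

lemma takeInls_flat {E : Type*} (s : List (List E)) (hs : ∀ I ∈ s, I ≠ []) :
    takeInls (flat s) = ([], flat s) := by
  cases s with
  | nil => simp [flat, takeInls]
  | cons I s =>
      cases I with
      | nil => exact absurd rfl (hs [] (by simp))
      | cons a r => simp [flat, flatBlock, takeInls]

lemma unflat_flat {E : Type*} (s : List (List E)) (hs : ∀ I ∈ s, I ≠ []) :
    unflat (flat s) = s := by
  induction s with
  | nil => simp [flat, unflat]
  | cons I s ih =>
      obtain ⟨a, r, rfl⟩ : ∃ a r, I = a :: r := by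
        cases I with
        | nil => exact absurd rfl (hs [] (by simp))
        | cons a r => exact ⟨a, r, rfl⟩
      have hs' : ∀ J ∈ s, J ≠ [] := fun J hJ => hs J (by simp [hJ])
      have h1 : flat ((a :: r) :: s) = Sum.inr a :: (r.map Sum.inl ++ flat s) := by
        simp [flat, flatBlock]
      rw [h1, unflat, takeInls_map_inl_append, takeInls_flat s hs']
      simp [ih hs']

/-- Flattening via transformed events is injective on sequences of nonempty sorted
itemsets, and the original sequence of itemsets can be recovered from the flat list
(by splitting at barred events). -/
theorem flat_injective_invertible {E : Type*} [LinearOrder E] :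
    (∀ s₁ s₂ : List (List E),
        (∀ I ∈ s₁, I ≠ [] ∧ I.Pairwise (· < ·)) →
        (∀ I ∈ s₂, I ≠ [] ∧ I.Pairwise (· < ·)) →
        flat s₁ = flat s₂ → s₁ = s₂) ∧
      ∃ g : List (E ⊕ E) → List (List E),
        ∀ s : List (List E), (∀ I ∈ s, I ≠ [] ∧ I.Pairwise (· < ·)) → g (flat s) = s := by
  constructor
  · intro s₁ s₂ h₁ h₂ hf
    have e₁ := unflat_flat s₁ (fun I hI => (h₁ I hI).1)
    have e₂ := unflat_flat s₂ (fun I hI => (h₂ I hI).1)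
    rw [← e₁, ← e₂, hf]
  · exact ⟨unflat, fun s hs => unflat_flat s (fun I hI => (hs I hI).1)⟩
end
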